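/- arXiv:2308.07742 — 2 statements merged into one kernel-verified Lean document; each statement's English description precedes it below -/
import Mathlib

section
/- Let W : ℝ² → ℝ² be continuously differentiable with compact support, let Δ ⊂ ℝ² be a bounded measurable set, let ν ∈ ℝ, and let v : ℝ × ℝ² → ℝ² be twice continuously differentiable. Write v = v(0, ·), v̇(x) = d/dt|_{t=0} v(t, F_t(x)), and ∇ for the spatial Jacobian. Then the map t ↦ ∫_{F_t(Δ)} (ν/2) ∇v(t,·)(y) : ∇v(t,·)(y) dy is differentiable at t = 0 and its derivative equals ∫_Δ [ ν ∇v̇(x) : ∇v(x) − ν (∇v(x) ∇W(x)) : ∇v(x) + div W(x) · (ν/2) ∇v(x) : ∇v(x) ] dx. -/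
open MeasureTheory

/-- Jacobian matrix of a vector field on `ℝ²`: `(jac v x) i j = ∂ v_i / ∂ x_j`. -/
noncomputable def jac (v : EuclideanSpace ℝ (Fin 2) → EuclideanSpace ℝ (Fin 2))
    (x : EuclideanSpace ℝ (Fin 2)) : Matrix (Fin 2) (Fin 2) ℝ :=
  Matrix.of fun i j => fderiv ℝ v x (EuclideanSpace.single j (1 : ℝ)) i

/-- Divergence of a vector field: the trace of its Jacobian. -/
noncomputable def divg (v : EuclideanSpace ℝ (Fin 2) → EuclideanSpace ℝ (Fin 2))
    (x : EuclideanSpace ℝ (Fin 2)) : ℝ :=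
  Matrix.trace (jac v x)

/-- Frobenius inner product of matrices: `A : B = ∑_{j,k} A_{jk} B_{jk}`. -/
def frob (A B : Matrix (Fin 2) (Fin 2) ℝ) : ℝ :=
  ∑ j, ∑ k, A j k * B j k

namespace ShapeDeriv

noncomputable section

abbrev E2 := EuclideanSpace ℝ (Fin 2)
abbrev es (j : Fin 2) : E2 := EuclideanSpace.single j (1:ℝ)

theorem euclid_decomp (y : E2) : y = ∑ k, y k • es k := by
  ext i
  rw [WithLp.ofLp_sum, Finset.sum_apply]
  simp only [PiLp.smul_apply, EuclideanSpace.single_apply, smul_eq_mul]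
  simp [Finset.sum_ite_eq]

theorem pair_decomp (y : E2) : ((0:ℝ), y) = ∑ k, y k • ((0:ℝ), es k) := by
  have := euclid_decomp y
  rw [Prod.ext_iff]
  constructor
  · simp
  · simpa using this

theorem clm_det_eq (f : E2 →L[ℝ] E2) :
    f.det = Matrix.det (Matrix.of fun i j => f (es j) i) := by
  rw [ContinuousLinearMap.det,
    ← LinearMap.det_toMatrix (EuclideanSpace.basisFun (Fin 2) ℝ).toBasis]
  congr 1

variable (W : E2 → E2) (v : ℝ × E2 → E2) (ν : ℝ)

/-- entry of the spatial Jacobian of `v(t,·)` as a function of the space-time point. -/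
def Phi (i j : Fin 2) (p : ℝ × E2) : ℝ := fderiv ℝ v p ((0:ℝ), es j) i

/-- the energy density. -/
def gg (p : ℝ × E2) : ℝ := (ν/2) * ∑ i, ∑ j, Phi v i j p * Phi v i j p

/-- entry of the material derivative of the Jacobian. -/
def Psi (i j : Fin 2) (t : ℝ) (x : E2) : ℝ :=
  fderiv ℝ (fderiv ℝ v) (t, x + t • W x) ((1:ℝ), W x) ((0:ℝ), es j) i

/-- determinant of `I + t ∇W x`. -/
def dpol (t : ℝ) (x : E2) : ℝ :=
  1 + t * (jac W x).trace + t^2 * (jac W x).det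

/-- pulled-back integrand. -/
def qq (x : E2) (t : ℝ) : ℝ := dpol W t x * gg v ν (t, x + t • W x)

/-- its `t`-derivative. -/
def qq' (x : E2) (t : ℝ) : ℝ :=
  ((jac W x).trace + 2*t*(jac W x).det) * gg v ν (t, x + t • W x)
    + dpol W t x * (ν * ∑ i, ∑ j, Phi v i j (t, x + t • W x) * Psi W v i j t x)

variable {W v}

theorem jac_slice (hv : Differentiable ℝ v) (t : ℝ) (y : E2) (i j : Fin 2) :
    jac (fun z => v (t, z)) y i j = Phi v i j (t, y) := by
  have h : HasFDerivAt (fun z : E2 => v (t, z))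
      ((fderiv ℝ v (t, y)).comp (ContinuousLinearMap.inr ℝ ℝ E2)) y :=
    (hv (t, y)).hasFDerivAt.comp y (hasFDerivAt_prodMk_right t y)
  simp [jac, h.fderiv, Phi]

theorem frob_eq_gg (hv : Differentiable ℝ v) (t : ℝ) (y : E2) :
    (ν / 2) * frob (jac (fun z => v (t, z)) y) (jac (fun z => v (t, z)) y) = gg v ν (t, y) := by
  unfold frob gg
  congr 1
  refine Finset.sum_congr rfl fun i _ => Finset.sum_congr rfl fun j _ => ?_
  rw [jac_slice hv]

theorem hasFDerivAt_Phi (hv : ContDiff ℝ 2 v) (p : ℝ × E2) (i j : Fin 2) :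
    HasFDerivAt (Phi v i j)
      ((EuclideanSpace.proj i).comp
        ((fderiv ℝ (fderiv ℝ v) p).flip ((0:ℝ), es j))) p := by
  have hc : ContDiff ℝ 1 (fderiv ℝ v) := hv.fderiv_right (by norm_num)
  have h1 : HasFDerivAt (fderiv ℝ v) (fderiv ℝ (fderiv ℝ v) p) p :=
    ((hc.differentiable one_ne_zero) p).hasFDerivAt
  have h2 := h1.clm_apply (hasFDerivAt_const (((0:ℝ), es j)) p)
  have h3 := (EuclideanSpace.proj (𝕜 := ℝ) i).hasFDerivAt.comp p h2
  convert h3 using 1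
  all_goals try rfl
  ext w
  all_goals simp [ContinuousLinearMap.comp_zero, ContinuousLinearMap.add_apply,
    ContinuousLinearMap.comp_apply]

theorem vdot_eq (hv : ContDiff ℝ 2 v) (z : E2) :
    deriv (fun t : ℝ => v (t, z + t • W z)) 0 = fderiv ℝ v ((0:ℝ), z) ((1:ℝ), W z) := by
  have hc : HasDerivAt (fun t : ℝ => ((t, z + t • W z) : ℝ × E2)) ((1:ℝ), W z) 0 := by
    have h1 : HasDerivAt (fun t : ℝ => t) (1:ℝ) 0 := hasDerivAt_id 0
    have h2 : HasDerivAt (fun t : ℝ => z + t • W z) (W z) 0 := by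
      simpa using ((hasDerivAt_id (0:ℝ)).smul_const (W z)).const_add z
    exact h1.prodMk h2
  have hd := ((hv.differentiable (by norm_num)
    ((0:ℝ), z + (0:ℝ) • W z)).hasFDerivAt.comp_hasDerivAt 0 hc)
  simp only [zero_smul, add_zero] at hd
  exact hd.deriv

theorem jac_vdot_entry (hW : ContDiff ℝ 1 W) (hv : ContDiff ℝ 2 v) (x : E2) (i j : Fin 2) :
    jac (fun z => fderiv ℝ v ((0:ℝ), z) ((1:ℝ), W z)) x i j
      = Psi W v i j 0 x
        + ∑ k, jac W x k j * Phi v i k ((0:ℝ), x) := by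
  have hf' : ContDiff ℝ 1 (fderiv ℝ v) := hv.fderiv_right (by norm_num)
  have hc : HasFDerivAt (fun z : E2 => fderiv ℝ v ((0:ℝ), z))
      ((fderiv ℝ (fderiv ℝ v) ((0:ℝ), x)).comp (ContinuousLinearMap.inr ℝ ℝ E2)) x :=
    ((hf'.differentiable one_ne_zero) ((0:ℝ), x)).hasFDerivAt.comp x (hasFDerivAt_prodMk_right (0:ℝ) x)
  have hu : HasFDerivAt (fun z : E2 => (((1:ℝ), W z) : ℝ × E2))
      ((0 : E2 →L[ℝ] ℝ).prod (fderiv ℝ W x)) x :=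
    (hasFDerivAt_const (1:ℝ) x).prodMk ((hW.differentiable one_ne_zero x).hasFDerivAt)
  have h := hc.clm_apply hu
  have hsym : fderiv ℝ (fderiv ℝ v) ((0:ℝ), x) ((0:ℝ), es j) ((1:ℝ), W x)
      = fderiv ℝ (fderiv ℝ v) ((0:ℝ), x) ((1:ℝ), W x) ((0:ℝ), es j) :=
    (hv.contDiffAt.isSymmSndFDerivAt (by norm_num)).eq _ _
  have hexp : fderiv ℝ v ((0:ℝ), x) ((0:ℝ), fderiv ℝ W x (es j)) i
      = ∑ k, fderiv ℝ W x (es j) k * fderiv ℝ v ((0:ℝ), x) ((0:ℝ), es k) i := by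
    rw [pair_decomp (fderiv ℝ W x (es j)), map_sum, WithLp.ofLp_sum, Finset.sum_apply]
    refine Finset.sum_congr rfl fun k _ => ?_
    rw [_root_.map_smul]
    simp [smul_eq_mul]
  calc jac (fun z => fderiv ℝ v ((0:ℝ), z) ((1:ℝ), W z)) x i j
      = fderiv ℝ (fun z => fderiv ℝ v ((0:ℝ), z) ((1:ℝ), W z)) x (es j) i := rfl
    _ = _ := by
        rw [h.fderiv]
        simp only [ContinuousLinearMap.add_apply, ContinuousLinearMap.comp_apply,
          ContinuousLinearMap.flip_apply, ContinuousLinearMap.prod_apply,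
          ContinuousLinearMap.zero_apply, ContinuousLinearMap.coe_comp',
          Function.comp_apply, ContinuousLinearMap.inr_apply]
        rw [PiLp.add_apply]
        rw [hsym, hexp]
        simp only [Psi, Phi, jac, zero_smul, add_zero, Matrix.of_apply]
        ring

end

end ShapeDeriv

namespace ShapeDeriv
noncomputable section
variable {W : E2 → E2} {v : ℝ × E2 → E2} {ν : ℝ}

theorem det_eq_dpol (hW : ContDiff ℝ 1 W) (t : ℝ) (x : E2) :
    (ContinuousLinearMap.id ℝ E2 + t • fderiv ℝ W x).det = dpol W t x := by
  rw [clm_det_eq, Matrix.det_fin_two]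
  simp only [ContinuousLinearMap.add_apply, ContinuousLinearMap.coe_id', id_eq,
    ContinuousLinearMap.smul_apply, Matrix.of_apply, PiLp.add_apply, PiLp.smul_apply,
    smul_eq_mul, dpol, jac, Matrix.trace_fin_two, Matrix.det_fin_two]
  have h0 : ∀ i j : Fin 2, (es j : E2) i = if i = j then 1 else 0 := fun i j =>
    EuclideanSpace.single_apply j 1 i
  rw [h0, h0, h0, h0]
  norm_num
  ring

theorem hasDerivAt_qq (hW : ContDiff ℝ 1 W) (hv : ContDiff ℝ 2 v) (x : E2) (t : ℝ) :
    HasDerivAt (qq W v ν x) (qq' W v ν x t) t := by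
  have hcurve : ∀ s : ℝ, HasDerivAt (fun s : ℝ => ((s, x + s • W x) : ℝ × E2)) ((1:ℝ), W x) s := by
    intro s
    have h2 : HasDerivAt (fun s : ℝ => x + s • W x) (W x) s := by
      simpa using ((hasDerivAt_id s).smul_const (W x)).const_add x
    exact (hasDerivAt_id s).prodMk h2
  have hPhi : ∀ i j : Fin 2,
      HasDerivAt (fun s : ℝ => Phi v i j (s, x + s • W x)) (Psi W v i j t x) t := by
    intro i j
    have := (hasFDerivAt_Phi hv (t, x + t • W x) i j).comp_hasDerivAt t (hcurve t)
    simp only [Function.comp_def] at this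
    exact this
  have hg : HasDerivAt (fun s : ℝ => gg v ν (s, x + s • W x))
      (ν * ∑ i, ∑ j, Phi v i j (t, x + t • W x) * Psi W v i j t x) t := by
    have hsum : HasDerivAt
        (fun s : ℝ => ∑ i, ∑ j, Phi v i j (s, x + s • W x) * Phi v i j (s, x + s • W x))
        (∑ i : Fin 2, ∑ j : Fin 2, (Psi W v i j t x * Phi v i j (t, x + t • W x)
          + Phi v i j (t, x + t • W x) * Psi W v i j t x)) t := by
      refine HasDerivAt.fun_sum fun i _ => ?_
      refine HasDerivAt.fun_sum fun j _ => ?_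
      exact (hPhi i j).mul (hPhi i j)
    have := hsum.const_mul (ν/2)
    convert this using 1
    case e'_4 => rfl
    case e'_5 => rfl
    case e'_8 => rfl
    simp only [Finset.mul_sum]
    exact Finset.sum_congr rfl fun i _ => Finset.sum_congr rfl fun j _ => by ring
  have hd : HasDerivAt (fun s : ℝ => dpol W s x)
      ((jac W x).trace + 2*t*(jac W x).det) t := by
    have h1 : HasDerivAt (fun s : ℝ => s * (jac W x).trace) ((jac W x).trace) t := by
      simpa using (hasDerivAt_id t).mul_const ((jac W x).trace)
    have h2 : HasDerivAt (fun s : ℝ => s^2 * (jac W x).det) (2*t*(jac W x).det) t := by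
      have := (hasDerivAt_pow 2 t).mul_const ((jac W x).det)
      convert this using 1
      case e'_4 => rfl
      case e'_5 => rfl
      push_cast
      ring
    have := ((hasDerivAt_const t (1:ℝ)).add h1).add h2
    convert this using 1
    case e'_4 => rfl
    case e'_5 => rfl
    case e'_8 => rfl
    ring
  have := hd.mul hg
  exact this

theorem qq'_zero (hW : ContDiff ℝ 1 W) (hv : ContDiff ℝ 2 v)
    (v₀ vdot : E2 → E2)
    (hv₀ : v₀ = fun z => v ((0 : ℝ), z))
    (hvdot : vdot = fun z => deriv (fun t : ℝ => v (t, z + t • W z)) 0) (x : E2) :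
    qq' W v ν x 0 =
      ν * frob (jac vdot x) (jac v₀ x)
        - ν * frob (jac v₀ x * jac W x) (jac v₀ x)
        + divg W x * ((ν / 2) * frob (jac v₀ x) (jac v₀ x)) := by
  have hdiffv : Differentiable ℝ v := hv.differentiable (by norm_num)
  have hP : ∀ i j : Fin 2, jac v₀ x i j = Phi v i j ((0:ℝ), x) := fun i j => by
    rw [hv₀]; exact jac_slice hdiffv 0 x i j
  have hvdot' : vdot = fun z => fderiv ℝ v ((0:ℝ), z) ((1:ℝ), W z) := by
    rw [hvdot]; funext z; exact vdot_eq hv z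
  have hD : ∀ i j : Fin 2, jac vdot x i j
      = Psi W v i j 0 x + ∑ k, jac W x k j * Phi v i k ((0:ℝ), x) := fun i j => by
    rw [hvdot']; exact jac_vdot_entry hW hv x i j
  simp only [qq', dpol, gg, frob, divg, Matrix.mul_apply, Matrix.trace_fin_two,
    Fin.sum_univ_two, hP, hD, zero_smul, add_zero]
  ring

theorem cont_Phi (hv : ContDiff ℝ 2 v) (i j : Fin 2) : Continuous (Phi v i j) := by
  have h1 : Continuous (fderiv ℝ v) := (hv.fderiv_right (m := 1) (by norm_num)).continuous
  exact (EuclideanSpace.proj (𝕜 := ℝ) i).continuous.comp (h1.clm_apply continuous_const)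

theorem cont_gg (hv : ContDiff ℝ 2 v) : Continuous (gg v ν) := by
  refine continuous_const.mul ?_
  exact continuous_finset_sum _ fun i _ => continuous_finset_sum _ fun j _ =>
    (cont_Phi hv i j).mul (cont_Phi hv i j)

theorem cont_Psi (hW : ContDiff ℝ 1 W) (hv : ContDiff ℝ 2 v) (i j : Fin 2) :
    Continuous (fun p : ℝ × E2 => Psi W v i j p.1 p.2) := by
  have h2 : Continuous (fderiv ℝ (fderiv ℝ v)) :=
    (hv.fderiv_right (m := 1) (by norm_num)).continuous_fderiv one_ne_zero
  have hcurve : Continuous (fun p : ℝ × E2 => ((p.1, p.2 + p.1 • W p.2) : ℝ × E2)) :=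
    continuous_fst.prodMk (continuous_snd.add
      (continuous_fst.smul ((hW.continuous).comp continuous_snd)))
  have hWc : Continuous (fun p : ℝ × E2 => (((1:ℝ), W p.2) : ℝ × E2)) :=
    continuous_const.prodMk ((hW.continuous).comp continuous_snd)
  exact (EuclideanSpace.proj (𝕜 := ℝ) i).continuous.comp
    ((((h2.comp hcurve).clm_apply hWc).clm_apply continuous_const))

theorem cont_jacW (hW : ContDiff ℝ 1 W) (i j : Fin 2) :
    Continuous (fun x => jac W x i j) := by
  have h1 : Continuous (fderiv ℝ W) := hW.continuous_fderiv one_ne_zero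
  exact (EuclideanSpace.proj (𝕜 := ℝ) i).continuous.comp (h1.clm_apply continuous_const)

theorem cont_trace (hW : ContDiff ℝ 1 W) : Continuous (fun x => (jac W x).trace) := by
  simp only [Matrix.trace_fin_two]
  exact (cont_jacW hW 0 0).add (cont_jacW hW 1 1)

theorem cont_detW (hW : ContDiff ℝ 1 W) : Continuous (fun x => (jac W x).det) := by
  simp only [Matrix.det_fin_two]
  exact ((cont_jacW hW 0 0).mul (cont_jacW hW 1 1)).sub
    ((cont_jacW hW 0 1).mul (cont_jacW hW 1 0))

theorem cont_qq (hW : ContDiff ℝ 1 W) (hv : ContDiff ℝ 2 v) :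
    Continuous (fun p : ℝ × E2 => qq W v ν p.2 p.1) := by
  have hcurve : Continuous (fun p : ℝ × E2 => ((p.1, p.2 + p.1 • W p.2) : ℝ × E2)) :=
    continuous_fst.prodMk (continuous_snd.add
      (continuous_fst.smul ((hW.continuous).comp continuous_snd)))
  have hdpol : Continuous (fun p : ℝ × E2 => dpol W p.1 p.2) := by
    unfold dpol
    exact (continuous_const.add (continuous_fst.mul ((cont_trace hW).comp continuous_snd))).add
      ((continuous_fst.pow 2).mul ((cont_detW hW).comp continuous_snd))
  exact hdpol.mul ((cont_gg hv).comp hcurve)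

theorem cont_qq' (hW : ContDiff ℝ 1 W) (hv : ContDiff ℝ 2 v) :
    Continuous (fun p : ℝ × E2 => qq' W v ν p.2 p.1) := by
  have hcurve : Continuous (fun p : ℝ × E2 => ((p.1, p.2 + p.1 • W p.2) : ℝ × E2)) :=
    continuous_fst.prodMk (continuous_snd.add
      (continuous_fst.smul ((hW.continuous).comp continuous_snd)))
  have hdpol : Continuous (fun p : ℝ × E2 => dpol W p.1 p.2) := by
    unfold dpol
    exact (continuous_const.add (continuous_fst.mul ((cont_trace hW).comp continuous_snd))).add
      ((continuous_fst.pow 2).mul ((cont_detW hW).comp continuous_snd))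
  unfold qq'
  refine Continuous.add ?_ ?_
  · exact (((cont_trace hW).comp continuous_snd).add
      ((continuous_const.mul continuous_fst).mul ((cont_detW hW).comp continuous_snd))).mul
      ((cont_gg hv).comp hcurve)
  · refine hdpol.mul (continuous_const.mul ?_)
    exact continuous_finset_sum _ fun i _ => continuous_finset_sum _ fun j _ =>
      (((cont_Phi hv i j).comp hcurve).mul (cont_Psi hW hv i j))

theorem abs_coord_le_norm (y : E2) (i : Fin 2) : |y i| ≤ ‖y‖ := by
  rw [EuclideanSpace.norm_eq]
  have h1 : |y i| = Real.sqrt (‖y i‖^2) := by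
    rw [Real.sqrt_sq_eq_abs]; simp
  rw [h1]
  apply Real.sqrt_le_sqrt
  exact Finset.single_le_sum (f := fun k => ‖y k‖^2) (fun k _ => sq_nonneg _)
    (Finset.mem_univ i)

end
end ShapeDeriv


set_option maxHeartbeats 2000000 in
open ShapeDeriv in
/-- Shape derivative of the dissipated-energy term
`t ↦ ∫_{F_t(Δ)} (ν/2) ∇v(t,·) : ∇v(t,·) dy`. -/
theorem shape_derivative_L1
    (W : EuclideanSpace ℝ (Fin 2) → EuclideanSpace ℝ (Fin 2))
    (hW : ContDiff ℝ 1 W) (hWc : HasCompactSupport W)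
    (Δ : Set (EuclideanSpace ℝ (Fin 2))) (hΔm : MeasurableSet Δ)
    (hΔb : Bornology.IsBounded Δ) (ν : ℝ)
    (v : ℝ × EuclideanSpace ℝ (Fin 2) → EuclideanSpace ℝ (Fin 2)) (hv : ContDiff ℝ 2 v)
    (v₀ vdot : EuclideanSpace ℝ (Fin 2) → EuclideanSpace ℝ (Fin 2))
    (hv₀ : v₀ = fun z => v ((0 : ℝ), z))
    (hvdot : vdot = fun z => deriv (fun t : ℝ => v (t, z + t • W z)) 0) :
    HasDerivAt
      (fun t : ℝ => ∫ y in (fun x => x + t • W x) '' Δ,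
        (ν / 2) * frob (jac (fun z => v (t, z)) y) (jac (fun z => v (t, z)) y))
      (∫ x in Δ,
        (ν * frob (jac vdot x) (jac v₀ x)
          - ν * frob (jac v₀ x * jac W x) (jac v₀ x)
          + divg W x * ((ν / 2) * frob (jac v₀ x) (jac v₀ x)))) (0 : ℝ) := by
  classical
  have hdiffv : Differentiable ℝ v := hv.differentiable (by norm_num)
  obtain ⟨K, hK⟩ := hW.lipschitzWith_of_hasCompactSupport hWc one_ne_zero
  obtain ⟨M, hM⟩ := (hWc.fderiv ℝ).exists_bound_of_continuous (hW.continuous_fderiv one_ne_zero)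
  have hM0 : 0 ≤ M := le_trans (norm_nonneg _) (hM 0)
  have hentry : ∀ (x : E2) (i j : Fin 2), |jac W x i j| ≤ M := by
    intro x i j
    have h1 : |jac W x i j| ≤ ‖fderiv ℝ W x (es j)‖ := abs_coord_le_norm _ i
    have h2 : ‖fderiv ℝ W x (es j)‖ ≤ ‖fderiv ℝ W x‖ * ‖(es j : E2)‖ :=
      (fderiv ℝ W x).le_opNorm _
    have h3 : ‖(es j : E2)‖ = 1 := by
      rw [EuclideanSpace.norm_single]; norm_num
    rw [h3, mul_one] at h2
    exact h1.trans (h2.trans (hM x))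
  have htr : ∀ x : E2, |(jac W x).trace| ≤ 2 * M := by
    intro x
    rw [Matrix.trace_fin_two]
    calc |jac W x 0 0 + jac W x 1 1| ≤ |jac W x 0 0| + |jac W x 1 1| := abs_add_le _ _
      _ ≤ 2 * M := by have := hentry x 0 0; have := hentry x 1 1; linarith
  have hdet : ∀ x : E2, |(jac W x).det| ≤ 2 * M ^ 2 := by
    intro x
    rw [Matrix.det_fin_two]
    calc |jac W x 0 0 * jac W x 1 1 - jac W x 0 1 * jac W x 1 0|
        ≤ |jac W x 0 0 * jac W x 1 1| + |jac W x 0 1 * jac W x 1 0| := abs_sub _ _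
      _ ≤ 2 * M ^ 2 := by
          rw [abs_mul, abs_mul]
          have h00 := hentry x 0 0; have h11 := hentry x 1 1
          have h01 := hentry x 0 1; have h10 := hentry x 1 0
          have n00 := abs_nonneg (jac W x 0 0); have n01 := abs_nonneg (jac W x 0 1)
          have n11 := abs_nonneg (jac W x 1 1); have n10 := abs_nonneg (jac W x 1 0)
          nlinarith
  set B : ℝ := 2 * M + 2 * M ^ 2 + 1 with hBdef
  have hB0 : 0 < B := by positivity
  set ε : ℝ := min (min 1 (1 / (2 * B))) (1 / ((K : ℝ) + 1)) with hεdef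
  have hε0 : 0 < ε := lt_min (lt_min one_pos (by positivity)) (by positivity)
  have hε1 : ε ≤ 1 := le_trans (min_le_left _ _) (min_le_left _ _)
  have hεB : ε ≤ 1 / (2 * B) := le_trans (min_le_left _ _) (min_le_right _ _)
  have hεK : ε ≤ 1 / ((K : ℝ) + 1) := min_le_right _ _
  have hdpos : ∀ t : ℝ, |t| < ε → ∀ x : E2, (1:ℝ)/2 ≤ dpol W t x := by
    intro t ht x
    have h1 : |t| ≤ 1 := le_of_lt (lt_of_lt_of_le ht hε1)
    have h2 : |t| ≤ 1 / (2 * B) := le_of_lt (lt_of_lt_of_le ht hεB)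
    have h3 := htr x
    have h4 := hdet x
    have habs : 0 ≤ |t| := abs_nonneg t
    have h5 : - (|t| * |(jac W x).trace|) ≤ t * (jac W x).trace := by
      rw [← abs_mul]; exact neg_abs_le _
    have h6 : - (|t|^2 * |(jac W x).det|) ≤ t^2 * (jac W x).det := by
      rw [← abs_pow, ← abs_mul]; exact neg_abs_le _
    have h7 : |t| * B ≤ 1/2 := by
      rw [le_div_iff₀ (by positivity : (0:ℝ) < 2*B)] at h2
      nlinarith
    have h8 : |t| * |(jac W x).trace| ≤ |t| * (2*M) :=
      mul_le_mul_of_nonneg_left h3 habs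
    have h9 : |t|^2 * |(jac W x).det| ≤ |t| * (2*M^2) := by
      have hsq : |t|^2 ≤ |t| := by nlinarith
      calc |t|^2 * |(jac W x).det| ≤ |t|^2 * (2*M^2) :=
            mul_le_mul_of_nonneg_left h4 (by positivity)
        _ ≤ |t| * (2*M^2) := mul_le_mul_of_nonneg_right hsq (by positivity)
    simp only [dpol]
    nlinarith
  have hinj : ∀ t : ℝ, |t| < ε → Set.InjOn (fun x => x + t • W x) Δ := by
    intro t ht x _ y _ hxy
    simp only at hxy
    have hd : x - y = t • W y - t • W x :=
      sub_eq_sub_iff_add_eq_add.mpr (by rw [hxy]; abel)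
    have hWlip : ‖W y - W x‖ ≤ (K : ℝ) * ‖x - y‖ := by
      have := hK.dist_le_mul y x
      rw [dist_eq_norm, dist_eq_norm] at this
      calc ‖W y - W x‖ ≤ (K:ℝ) * ‖y - x‖ := this
        _ = (K:ℝ) * ‖x - y‖ := by rw [norm_sub_rev]
    have hn : ‖x - y‖ ≤ |t| * ((K:ℝ) * ‖x - y‖) := by
      have heq : ‖x - y‖ = |t| * ‖W y - W x‖ := by
        rw [hd, ← smul_sub, norm_smul, Real.norm_eq_abs]
      calc ‖x - y‖ = |t| * ‖W y - W x‖ := heq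
        _ ≤ |t| * ((K:ℝ) * ‖x - y‖) := mul_le_mul_of_nonneg_left hWlip (abs_nonneg t)
    have htK : |t| * ((K:ℝ) + 1) < 1 := by
      have h1 : |t| < 1/((K:ℝ)+1) := lt_of_lt_of_le ht hεK
      rw [lt_div_iff₀ (by positivity)] at h1
      linarith
    have hzero : ‖x - y‖ = 0 := by
      have h0 := norm_nonneg (x - y)
      have habs := abs_nonneg t
      nlinarith
    exact sub_eq_zero.mp (norm_eq_zero.mp hzero)
  have hFder : ∀ (t : ℝ) (x : E2), HasFDerivAt (fun x : E2 => x + t • W x)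
      (ContinuousLinearMap.id ℝ E2 + t • fderiv ℝ W x) x := fun t x =>
    (hasFDerivAt_id x).add (((hW.differentiable one_ne_zero x).hasFDerivAt).const_smul t)
  have hcov : ∀ t : ℝ, |t| < ε →
      (∫ y in (fun x => x + t • W x) '' Δ,
        (ν / 2) * frob (jac (fun z => v (t, z)) y) (jac (fun z => v (t, z)) y))
      = ∫ x in Δ, qq W v ν x t := by
    intro t ht
    have h1 : (∫ y in (fun x => x + t • W x) '' Δ,
        (ν / 2) * frob (jac (fun z => v (t, z)) y) (jac (fun z => v (t, z)) y))
        = ∫ y in (fun x => x + t • W x) '' Δ, gg v ν (t, y) :=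
      integral_congr_ae (Filter.Eventually.of_forall fun y => frob_eq_gg ν hdiffv t y)
    rw [h1]
    rw [integral_image_eq_integral_abs_det_fderiv_smul volume hΔm
      (fun x _ => (hFder t x).hasFDerivWithinAt) (hinj t ht) (fun y => gg v ν (t, y))]
    refine integral_congr_ae (Filter.Eventually.of_forall fun x => ?_)
    show |(ContinuousLinearMap.id ℝ E2 + t • fderiv ℝ W x).det| • gg v ν (t, x + t • W x)
      = qq W v ν x t
    rw [det_eq_dpol hW, smul_eq_mul,
      abs_of_pos (lt_of_lt_of_le one_half_pos (hdpos t ht x))]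
    rfl
  have hev : (fun t : ℝ => ∫ y in (fun x => x + t • W x) '' Δ,
      (ν / 2) * frob (jac (fun z => v (t, z)) y) (jac (fun z => v (t, z)) y))
      =ᶠ[nhds (0:ℝ)] (fun t => ∫ x in Δ, qq W v ν x t) := by
    filter_upwards [Metric.ball_mem_nhds (0:ℝ) hε0] with t ht
    have : |t| < ε := by simpa [Real.dist_eq] using ht
    exact hcov t this
  have hfin : volume Δ < ⊤ := hΔb.measure_lt_top
  have hKcpt : IsCompact ((Set.Icc (-1:ℝ) 1) ×ˢ closure Δ) :=
    isCompact_Icc.prod hΔb.isCompact_closure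
  obtain ⟨C, hC⟩ := hKcpt.exists_bound_of_continuousOn
    (cont_qq' (W := W) (v := v) (ν := ν) hW hv).continuousOn
  obtain ⟨C₀, hC₀⟩ := hKcpt.exists_bound_of_continuousOn
    (cont_qq (W := W) (v := v) (ν := ν) hW hv).continuousOn
  have hmem : ∀ t : ℝ, |t| ≤ 1 → ∀ x ∈ Δ,
      ((t, x) : ℝ × E2) ∈ (Set.Icc (-1:ℝ) 1) ×ˢ closure Δ := fun t ht x hx =>
    Set.mem_prod.mpr ⟨Set.mem_Icc.mpr (abs_le.mp ht), subset_closure hx⟩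
  have h_bound : ∀ᵐ x ∂(volume.restrict Δ), ∀ t ∈ Metric.ball (0:ℝ) ε,
      ‖qq' W v ν x t‖ ≤ C := by
    filter_upwards [ae_restrict_mem hΔm] with x hx t ht
    have h1 : |t| < ε := by simpa [Real.dist_eq] using ht
    exact hC (t, x) (hmem t (le_of_lt (lt_of_lt_of_le h1 hε1)) x hx)
  have bound_int : Integrable (fun _ : E2 => C) (volume.restrict Δ) := by
    apply (integrableOn_const_iff (C := C)).mpr
    exact Or.inr hfin
  have hF_meas : ∀ᶠ t in nhds (0:ℝ),
      AEStronglyMeasurable (fun x => qq W v ν x t) (volume.restrict Δ) :=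
    Filter.Eventually.of_forall fun t =>
      (((cont_qq (W := W) (v := v) (ν := ν) hW hv).comp
        (continuous_const.prodMk continuous_id)).aestronglyMeasurable).restrict
  have hF_int : Integrable (fun x => qq W v ν x 0) (volume.restrict Δ) := by
    apply Measure.integrableOn_of_bounded hfin.ne
      (((cont_qq (W := W) (v := v) (ν := ν) hW hv).comp
        (continuous_const.prodMk continuous_id)).aestronglyMeasurable)
    filter_upwards [ae_restrict_mem hΔm] with x hx
    exact hC₀ (0, x) (hmem 0 (by norm_num) x hx)
  have hF'_meas : AEStronglyMeasurable (fun x => qq' W v ν x 0) (volume.restrict Δ) :=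
    (((cont_qq' (W := W) (v := v) (ν := ν) hW hv).comp
      (continuous_const.prodMk continuous_id)).aestronglyMeasurable).restrict
  have h_diff : ∀ᵐ x ∂(volume.restrict Δ), ∀ t ∈ Metric.ball (0:ℝ) ε,
      HasDerivAt (fun s => qq W v ν x s) (qq' W v ν x t) t :=
    Filter.Eventually.of_forall fun x t _ => hasDerivAt_qq hW hv x t
  have main := (hasDerivAt_integral_of_dominated_loc_of_deriv_le (Metric.ball_mem_nhds 0 hε0) hF_meas hF_int
    hF'_meas h_bound bound_int h_diff).2
  have hval : (∫ x in Δ,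
      (ν * frob (jac vdot x) (jac v₀ x)
        - ν * frob (jac v₀ x * jac W x) (jac v₀ x)
        + divg W x * ((ν / 2) * frob (jac v₀ x) (jac v₀ x))))
      = ∫ x in Δ, qq' W v ν x 0 :=
    integral_congr_ae (Filter.Eventually.of_forall fun x =>
      (qq'_zero hW hv v₀ vdot hv₀ hvdot x).symm)
  rw [hval]
  exact main.congr_of_eventuallyEq hev
end

section
/- Let W : ℝ² → ℝ² be continuously differentiable with compact support, let Δ ⊂ ℝ² be a bounded measurable set, let ν ∈ ℝ, and let v, φ : ℝ × ℝ² → ℝ² be twice continuously differentiable. Write v = v(0, ·), φ = φ(0, ·), v̇(x) = d/dt|_{t=0} v(t, F_t(x)), φ̇(x) = d/dt|_{t=0} φ(t, F_t(x)), and ∇ for the spatial Jacobian. Then the map t ↦ ∫_{F_t(Δ)} ν ∇v(t,·)(y) : ∇φ(t,·)(y) dy is differentiable at t = 0 and its derivative equals ∫_Δ [ ν ∇v̇(x) : ∇φ(x) − ν (∇v(x) ∇W(x)) : ∇φ(x) + ν ∇v(x) : ∇φ̇(x) − ν ∇v(x) : (∇φ(x) ∇W(x)) + div W(x) · ν ∇v(x)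 : ∇φ(x) ] dx. -/
open MeasureTheory

noncomputable abbrev E2 := EuclideanSpace ℝ (Fin 2)
noncomputable abbrev e2 (j : Fin 2) : E2 := EuclideanSpace.single j (1:ℝ)

lemma hasDerivAt_curve (W : E2 → E2) (x : E2) (t : ℝ) :
    HasDerivAt (fun s : ℝ => ((s, x + s • W x) : ℝ × E2)) ((1:ℝ), W x) t := by
  have h1 : HasDerivAt (fun s : ℝ => s) (1:ℝ) t := hasDerivAt_id t
  have h2 : HasDerivAt (fun s : ℝ => x + s • W x) (W x) t := by
    simpa using ((hasDerivAt_id t).smul_const (W x)).const_add x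
  exact h1.prodMk h2

lemma fderiv_partial (u : ℝ × E2 → E2) {t : ℝ} {x : E2} (hu : DifferentiableAt ℝ u (t,x)) :
    fderiv ℝ (fun z => u (t,z)) x = (fderiv ℝ u (t,x)).comp (ContinuousLinearMap.inr ℝ ℝ E2) := by
  have h : HasFDerivAt (fun z : E2 => ((t, z) : ℝ × E2)) (ContinuousLinearMap.inr ℝ ℝ E2) x :=
    hasFDerivAt_prodMk_right t x
  exact (hu.hasFDerivAt.comp x h).fderiv

lemma jac_partial (u : ℝ × E2 → E2) (hu : ContDiff ℝ 2 u) (t : ℝ) (x : E2) (i j : Fin 2) :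
    jac (fun z => u (t, z)) x i j = fderiv ℝ u (t, x) ((0:ℝ), e2 j) i := by
  rw [jac, Matrix.of_apply, fderiv_partial u ((hu.differentiable (by norm_num)) _)]
  rfl

lemma hasDerivAt_entry (u : ℝ × E2 → E2) (hu : ContDiff ℝ 2 u) (W : E2 → E2)
    (x : E2) (i j : Fin 2) (t : ℝ) :
    HasDerivAt (fun s : ℝ => fderiv ℝ u (s, x + s • W x) ((0:ℝ), e2 j) i)
      (fderiv ℝ (fderiv ℝ u) (t, x + t • W x) ((1:ℝ), W x) ((0:ℝ), e2 j) i) t := by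
  have hDu : ContDiff ℝ 1 (fderiv ℝ u) := hu.fderiv_right (by norm_num)
  have hD : HasFDerivAt (fderiv ℝ u) (fderiv ℝ (fderiv ℝ u) (t, x + t • W x))
      (t, x + t • W x) := (hDu.differentiable one_ne_zero _).hasFDerivAt
  have H1 : HasDerivAt (fun s : ℝ => fderiv ℝ u (s, x + s • W x))
      (fderiv ℝ (fderiv ℝ u) (t, x + t • W x) ((1:ℝ), W x)) t :=
    hD.comp_hasDerivAt t (hasDerivAt_curve W x t)
  have H2 : HasDerivAt (fun s : ℝ => fderiv ℝ u (s, x + s • W x) ((0:ℝ), e2 j))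
      (fderiv ℝ (fderiv ℝ u) (t, x + t • W x) ((1:ℝ), W x) ((0:ℝ), e2 j)) t := by
    simpa using H1.clm_apply (hasDerivAt_const t (((0:ℝ), e2 j) : ℝ × E2))
  have hproj : HasFDerivAt (fun y : E2 => y i) (EuclideanSpace.proj (𝕜 := ℝ) i)
      (fderiv ℝ u (t, x + t • W x) ((0:ℝ), e2 j)) := PiLp.hasFDerivAt_apply (𝕜 := ℝ) 2 _ i
  exact hproj.comp_hasDerivAt t H2

lemma basis_expand (w : E2) : w = ∑ k : Fin 2, w k • e2 k := by
  ext i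
  simp [e2, EuclideanSpace.single_apply, Fin.sum_univ_two]
  fin_cases i <;> simp

lemma smul_pair (c : ℝ) (w : E2) :
    (((0:ℝ), c • w) : ℝ × E2) = c • (((0:ℝ), w) : ℝ × E2) := by
  simp [Prod.ext_iff]

lemma dot_eq (u : ℝ × E2 → E2) (hu : ContDiff ℝ 2 u) (W : E2 → E2) :
    (fun z => deriv (fun t : ℝ => u (t, z + t • W z)) 0)
      = fun z => fderiv ℝ u ((0:ℝ), z) ((1:ℝ), W z) := by
  funext z
  have hD : HasFDerivAt u (fderiv ℝ u ((0:ℝ), z + (0:ℝ) • W z)) ((0:ℝ), z + (0:ℝ) • W z) :=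
    ((hu.differentiable (by norm_num)) _).hasFDerivAt
  have H := hD.comp_hasDerivAt 0 (hasDerivAt_curve W z 0)
  simp only [zero_smul, add_zero] at H
  exact H.deriv

lemma jac_dot (u : ℝ × E2 → E2) (hu : ContDiff ℝ 2 u) (W : E2 → E2) (hW : ContDiff ℝ 1 W)
    (x : E2) (i j : Fin 2) :
    jac (fun z => fderiv ℝ u ((0:ℝ), z) ((1:ℝ), W z)) x i j
      = fderiv ℝ (fderiv ℝ u) ((0:ℝ), x) ((1:ℝ), W x) ((0:ℝ), e2 j) i
        + ∑ k : Fin 2, fderiv ℝ u ((0:ℝ), x) ((0:ℝ), e2 k) i * fderiv ℝ W x (e2 j) k := by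
  have hDu : ContDiff ℝ 1 (fderiv ℝ u) := hu.fderiv_right (by norm_num)
  have hc : HasFDerivAt (fun z : E2 => fderiv ℝ u ((0:ℝ), z))
      ((fderiv ℝ (fderiv ℝ u) ((0:ℝ), x)).comp (ContinuousLinearMap.inr ℝ ℝ E2)) x :=
    ((hDu.differentiable one_ne_zero) _).hasFDerivAt.comp x (hasFDerivAt_prodMk_right 0 x)
  have hm : HasFDerivAt (fun z : E2 => (((1:ℝ), W z) : ℝ × E2))
      ((0 : E2 →L[ℝ] ℝ).prod (fderiv ℝ W x)) x :=
    (hasFDerivAt_const (1:ℝ) x).prodMk ((hW.differentiable one_ne_zero) x).hasFDerivAt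
  have hf := hc.clm_apply hm
  have h1 : jac (fun z => fderiv ℝ u ((0:ℝ), z) ((1:ℝ), W z)) x i j
      = (fderiv ℝ u ((0:ℝ), x) ((0:ℝ), fderiv ℝ W x (e2 j))
        + fderiv ℝ (fderiv ℝ u) ((0:ℝ), x) ((0:ℝ), e2 j) ((1:ℝ), W x)) i := by
    rw [jac, Matrix.of_apply, hf.fderiv]
    simp [e2]
  rw [h1]
  have h2 : fderiv ℝ u ((0:ℝ), x) ((0:ℝ), fderiv ℝ W x (e2 j))
      = ∑ k : Fin 2, fderiv ℝ W x (e2 j) k • fderiv ℝ u ((0:ℝ), x) ((0:ℝ), e2 k) := by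
    conv_lhs => rw [basis_expand (fderiv ℝ W x (e2 j))]
    rw [show ((0:ℝ), ∑ k : Fin 2, fderiv ℝ W x (e2 j) k • e2 k)
        = ∑ k : Fin 2, fderiv ℝ W x (e2 j) k • (((0:ℝ), e2 k) : ℝ × E2) by
      simp [Prod.ext_iff, Fin.sum_univ_two], map_sum]
    simp only [smul_pair, ContinuousLinearMap.map_smul]
  have h3 : fderiv ℝ (fderiv ℝ u) ((0:ℝ), x) ((0:ℝ), e2 j) ((1:ℝ), W x)
      = fderiv ℝ (fderiv ℝ u) ((0:ℝ), x) ((1:ℝ), W x) ((0:ℝ), e2 j) :=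
    (hu.contDiffAt.isSymmSndFDerivAt (by simp)).eq _ _
  rw [h2, h3]
  simp [Fin.sum_univ_two, mul_comm]
  ring

lemma W_bound {W : E2 → E2} (hW : ContDiff ℝ 1 W) (hWc : HasCompactSupport W) :
    ∃ M : ℝ, 0 < M ∧ (∀ x, ‖fderiv ℝ W x‖ ≤ M) ∧ ∀ x y, ‖W x - W y‖ ≤ M * ‖x - y‖ := by
  have cont : Continuous (fderiv ℝ W) := hW.continuous_fderiv one_ne_zero
  have supp : HasCompactSupport (fderiv ℝ W) := hWc.fderiv ℝ
  obtain ⟨C, hC⟩ := cont.bounded_above_of_compact_support supp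
  refine ⟨max C 1, lt_of_lt_of_le one_pos (le_max_right _ _),
    fun x => le_trans (hC x) (le_max_left _ _), ?_⟩
  have hlip : LipschitzWith (max C 1).toNNReal W := by
    apply lipschitzWith_of_nnnorm_fderiv_le (hW.differentiable one_ne_zero)
    intro x
    rw [← NNReal.coe_le_coe]
    simp only [coe_nnnorm]
    rw [Real.coe_toNNReal _ (le_trans zero_le_one (le_max_right C 1))]
    exact le_trans (hC x) (le_max_left _ _)
  intro x y
  have := hlip.dist_le_mul x y
  rw [dist_eq_norm, dist_eq_norm] at this
  refine le_trans this ?_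
  gcongr
  rw [Real.coe_toNNReal _ (le_trans zero_le_one (le_max_right C 1))]

lemma det_eq {W : E2 → E2} (t : ℝ) (x : E2) :
    (ContinuousLinearMap.id ℝ E2 + t • fderiv ℝ W x).det
      = 1 + t * Matrix.trace (jac W x) + t ^ 2 * Matrix.det (jac W x) := by
  classical
  set b := (EuclideanSpace.basisFun (Fin 2) ℝ).toBasis with hb
  set L := ContinuousLinearMap.id ℝ E2 + t • fderiv ℝ W x with hL
  have hdet : (L : E2 →ₗ[ℝ] E2).det = Matrix.det (LinearMap.toMatrix b b (L : E2 →ₗ[ℝ] E2)) :=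
    (LinearMap.det_toMatrix b _).symm
  have hentry : ∀ i j, LinearMap.toMatrix b b (L : E2 →ₗ[ℝ] E2) i j
      = (if i = j then 1 else 0) + t * jac W x i j := by
    intro i j
    rw [LinearMap.toMatrix_apply]
    have hbj : b j = EuclideanSpace.single j (1:ℝ) := by
      simp [hb, EuclideanSpace.basisFun_apply]
    have hrepr : ∀ y : E2, b.repr y i = y i := fun y => by
      simp [hb]
    rw [hrepr, hbj]
    simp [hL, jac, EuclideanSpace.single_apply, eq_comm]
  have hcd : ContinuousLinearMap.det L = (L : E2 →ₗ[ℝ] E2).det := rfl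
  rw [hcd, hdet]
  rw [Matrix.det_fin_two, hentry 0 0, hentry 0 1, hentry 1 0, hentry 1 1,
    Matrix.trace_fin_two, Matrix.det_fin_two]
  norm_num
  ring

lemma cont_apply {X : Type*} [TopologicalSpace X] {F G : Type*} [NormedAddCommGroup F]
    [NormedSpace ℝ F] [NormedAddCommGroup G] [NormedSpace ℝ G]
    {f : X → F →L[ℝ] G} {m : X → F} (hf : Continuous f) (hm : Continuous m) :
    Continuous fun x => f x (m x) :=
  isBoundedBilinearMap_apply.continuous.comp (hf.prodMk hm)

lemma cont_entry {X : Type*} [TopologicalSpace X] {F : Type*} [NormedAddCommGroup F]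
    [NormedSpace ℝ F] {f : X → F →L[ℝ] E2} {m : X → F} (hf : Continuous f)
    (hm : Continuous m) (i : Fin 2) : Continuous fun x => f x (m x) i :=
  (EuclideanSpace.proj (𝕜 := ℝ) i : E2 →L[ℝ] ℝ).continuous.comp (cont_apply hf hm)

lemma coord_le_norm (y : E2) (i : Fin 2) : |y i| ≤ ‖y‖ := by
  rw [EuclideanSpace.norm_eq]
  rw [show |y i| = Real.sqrt (|y i| ^ 2) by rw [Real.sqrt_sq_eq_abs, abs_abs]]
  apply Real.sqrt_le_sqrt
  rw [show |y i| ^ 2 = ‖y i‖ ^ 2 by rw [Real.norm_eq_abs]]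
  exact Finset.single_le_sum (f := fun k => ‖y k‖ ^ 2)
    (fun k _ => sq_nonneg _) (Finset.mem_univ i)

noncomputable def aE (u : ℝ × E2 → E2) (W : E2 → E2) (i j : Fin 2) (t : ℝ) (x : E2) : ℝ :=
  fderiv ℝ u (t, x + t • W x) ((0:ℝ), e2 j) i

noncomputable def aE' (u : ℝ × E2 → E2) (W : E2 → E2) (i j : Fin 2) (t : ℝ) (x : E2) : ℝ :=
  fderiv ℝ (fderiv ℝ u) (t, x + t • W x) ((1:ℝ), W x) ((0:ℝ), e2 j) i

noncomputable def Pd (W : E2 → E2) (t : ℝ) (x : E2) : ℝ :=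
  1 + t * Matrix.trace (jac W x) + t ^ 2 * Matrix.det (jac W x)

noncomputable def gg (ν : ℝ) (v φ : ℝ × E2 → E2) (W : E2 → E2) (t : ℝ) (x : E2) : ℝ :=
  ν * (∑ i, ∑ j, aE v W i j t x * aE φ W i j t x) * Pd W t x

noncomputable def gg' (ν : ℝ) (v φ : ℝ × E2 → E2) (W : E2 → E2) (t : ℝ) (x : E2) : ℝ :=
  ν * (∑ i, ∑ j, (aE' v W i j t x * aE φ W i j t x + aE v W i j t x * aE' φ W i j t x))
      * Pd W t x
    + ν * (∑ i, ∑ j, aE v W i j t x * aE φ W i j t x)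
      * (Matrix.trace (jac W x) + 2 * t * Matrix.det (jac W x))

lemma hasDerivAt_gg (ν : ℝ) (v φ : ℝ × E2 → E2) (W : E2 → E2)
    (hv : ContDiff ℝ 2 v) (hφ : ContDiff ℝ 2 φ) (t : ℝ) (x : E2) :
    HasDerivAt (fun s => gg ν v φ W s x) (gg' ν v φ W t x) t := by
  have hS : HasDerivAt (fun s => ∑ i, ∑ j, aE v W i j s x * aE φ W i j s x)
      (∑ i, ∑ j, (aE' v W i j t x * aE φ W i j t x + aE v W i j t x * aE' φ W i j t x)) t := by
    apply HasDerivAt.fun_sum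
    intro i _
    apply HasDerivAt.fun_sum
    intro j _
    exact (hasDerivAt_entry v hv W x i j t).mul (hasDerivAt_entry φ hφ W x i j t)
  have hP : HasDerivAt (fun s => Pd W s x)
      (Matrix.trace (jac W x) + 2 * t * Matrix.det (jac W x)) t := by
    unfold Pd
    have h1 : HasDerivAt (fun s : ℝ => s * Matrix.trace (jac W x))
        (Matrix.trace (jac W x)) t := by
      simpa using (hasDerivAt_id t).mul_const (Matrix.trace (jac W x))
    have h2 : HasDerivAt (fun s : ℝ => s ^ 2 * Matrix.det (jac W x))
        (2 * t * Matrix.det (jac W x)) t := by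
      simpa [pow_one] using (hasDerivAt_pow 2 t).mul_const (Matrix.det (jac W x))
    refine (((hasDerivAt_const t (1:ℝ)).add h1).add h2).congr_deriv ?_
    ring
  have := ((hS.const_mul ν).mul hP)
  unfold gg gg'
  exact this

lemma cont_Gamma {W : E2 → E2} (hW : ContDiff ℝ 1 W) :
    Continuous fun p : ℝ × E2 => ((p.1, p.2 + p.1 • W p.2) : ℝ × E2) :=
  continuous_fst.prodMk (continuous_snd.add
    (continuous_fst.smul (hW.continuous.comp continuous_snd)))

lemma cont_aE (u : ℝ × E2 → E2) (W : E2 → E2) (hu : ContDiff ℝ 2 u) (hW : ContDiff ℝ 1 W)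
    (i j : Fin 2) : Continuous fun p : ℝ × E2 => aE u W i j p.1 p.2 := by
  have hDu : Continuous (fderiv ℝ u) := (hu.fderiv_right (m := 1) (by norm_num)).continuous
  exact cont_entry (hDu.comp (cont_Gamma hW)) continuous_const i

lemma cont_aE' (u : ℝ × E2 → E2) (W : E2 → E2) (hu : ContDiff ℝ 2 u) (hW : ContDiff ℝ 1 W)
    (i j : Fin 2) : Continuous fun p : ℝ × E2 => aE' u W i j p.1 p.2 := by
  have hD2 : Continuous (fderiv ℝ (fderiv ℝ u)) :=
    (hu.fderiv_right (m := 1) (by norm_num)).continuous_fderiv one_ne_zero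
  have h1 : Continuous fun p : ℝ × E2 =>
      fderiv ℝ (fderiv ℝ u) (p.1, p.2 + p.1 • W p.2) ((1:ℝ), W p.2) :=
    cont_apply (hD2.comp (cont_Gamma hW))
      (continuous_const.prodMk (hW.continuous.comp continuous_snd))
  exact cont_entry h1 continuous_const i

lemma cont_jacW (W : E2 → E2) (hW : ContDiff ℝ 1 W) (k j : Fin 2) :
    Continuous fun x : E2 => jac W x k j := by
  have hDW : Continuous (fderiv ℝ W) := hW.continuous_fderiv one_ne_zero
  exact cont_entry hDW continuous_const k

lemma cont_trW (W : E2 → E2) (hW : ContDiff ℝ 1 W) :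
    Continuous fun x : E2 => Matrix.trace (jac W x) := by
  have : (fun x : E2 => Matrix.trace (jac W x))
      = fun x => jac W x 0 0 + jac W x 1 1 := funext fun x => Matrix.trace_fin_two _
  rw [this]
  exact (cont_jacW W hW 0 0).add (cont_jacW W hW 1 1)

lemma cont_detW (W : E2 → E2) (hW : ContDiff ℝ 1 W) :
    Continuous fun x : E2 => Matrix.det (jac W x) := by
  have : (fun x : E2 => Matrix.det (jac W x))
      = fun x => jac W x 0 0 * jac W x 1 1 - jac W x 0 1 * jac W x 1 0 :=
    funext fun x => Matrix.det_fin_two _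
  rw [this]
  exact ((cont_jacW W hW 0 0).mul (cont_jacW W hW 1 1)).sub
    ((cont_jacW W hW 0 1).mul (cont_jacW W hW 1 0))

lemma cont_Pd (W : E2 → E2) (hW : ContDiff ℝ 1 W) :
    Continuous fun p : ℝ × E2 => Pd W p.1 p.2 := by
  unfold Pd
  exact (continuous_const.add (continuous_fst.mul
    ((cont_trW W hW).comp continuous_snd))).add
    ((continuous_fst.pow 2).mul ((cont_detW W hW).comp continuous_snd))

lemma cont_S (ν : ℝ) (v φ : ℝ × E2 → E2) (W : E2 → E2)
    (hv : ContDiff ℝ 2 v) (hφ : ContDiff ℝ 2 φ) (hW : ContDiff ℝ 1 W) :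
    Continuous fun p : ℝ × E2 => ∑ i, ∑ j, aE v W i j p.1 p.2 * aE φ W i j p.1 p.2 := by
  apply continuous_finset_sum
  intro i _
  apply continuous_finset_sum
  intro j _
  exact (cont_aE v W hv hW i j).mul (cont_aE φ W hφ hW i j)

lemma cont_gg (ν : ℝ) (v φ : ℝ × E2 → E2) (W : E2 → E2)
    (hv : ContDiff ℝ 2 v) (hφ : ContDiff ℝ 2 φ) (hW : ContDiff ℝ 1 W) :
    Continuous fun p : ℝ × E2 => gg ν v φ W p.1 p.2 := by
  unfold gg
  exact (continuous_const.mul (cont_S ν v φ W hv hφ hW)).mul (cont_Pd W hW)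

lemma cont_gg' (ν : ℝ) (v φ : ℝ × E2 → E2) (W : E2 → E2)
    (hv : ContDiff ℝ 2 v) (hφ : ContDiff ℝ 2 φ) (hW : ContDiff ℝ 1 W) :
    Continuous fun p : ℝ × E2 => gg' ν v φ W p.1 p.2 := by
  unfold gg'
  have hS' : Continuous fun p : ℝ × E2 =>
      ∑ i, ∑ j, (aE' v W i j p.1 p.2 * aE φ W i j p.1 p.2
        + aE v W i j p.1 p.2 * aE' φ W i j p.1 p.2) := by
    apply continuous_finset_sum
    intro i _
    apply continuous_finset_sum
    intro j _
    exact ((cont_aE' v W hv hW i j).mul (cont_aE φ W hφ hW i j)).add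
      ((cont_aE v W hv hW i j).mul (cont_aE' φ W hφ hW i j))
  exact ((continuous_const.mul hS').mul (cont_Pd W hW)).add
    ((continuous_const.mul (cont_S ν v φ W hv hφ hW)).mul
      (((cont_trW W hW).comp continuous_snd).add
        ((continuous_const.mul continuous_fst).mul ((cont_detW W hW).comp continuous_snd))))

lemma gg'_zero (ν : ℝ) (v φ : ℝ × E2 → E2) (W : E2 → E2)
    (hv : ContDiff ℝ 2 v) (hφ : ContDiff ℝ 2 φ) (hW : ContDiff ℝ 1 W) (x : E2) :
    gg' ν v φ W 0 x =
      ν * frob (jac (fun z => fderiv ℝ v ((0:ℝ), z) ((1:ℝ), W z)) x)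
          (jac (fun z => φ ((0:ℝ), z)) x)
        - ν * frob (jac (fun z => v ((0:ℝ), z)) x * jac W x) (jac (fun z => φ ((0:ℝ), z)) x)
        + ν * frob (jac (fun z => v ((0:ℝ), z)) x)
            (jac (fun z => fderiv ℝ φ ((0:ℝ), z) ((1:ℝ), W z)) x)
        - ν * frob (jac (fun z => v ((0:ℝ), z)) x) (jac (fun z => φ ((0:ℝ), z)) x * jac W x)
        + divg W x * (ν * frob (jac (fun z => v ((0:ℝ), z)) x)
            (jac (fun z => φ ((0:ℝ), z)) x)) := by
  have hv0 : ∀ i j, jac (fun z => v ((0:ℝ), z)) x i j = aE v W i j 0 x := by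
    intro i j
    rw [jac_partial v hv 0 x i j]
    simp [aE]
  have hφ0 : ∀ i j, jac (fun z => φ ((0:ℝ), z)) x i j = aE φ W i j 0 x := by
    intro i j
    rw [jac_partial φ hφ 0 x i j]
    simp [aE]
  have hjw : ∀ k j, fderiv ℝ W x (e2 j) k = jac W x k j := fun k j => rfl
  have hvdot : ∀ i j, jac (fun z => fderiv ℝ v ((0:ℝ), z) ((1:ℝ), W z)) x i j
      = aE' v W i j 0 x + ∑ k, aE v W i k 0 x * jac W x k j := by
    intro i j
    rw [jac_dot v hv W hW x i j]
    simp only [hjw]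
    congr 1
    · simp [aE']
    · exact Finset.sum_congr rfl fun k _ => by simp [aE]
  have hφdot : ∀ i j, jac (fun z => fderiv ℝ φ ((0:ℝ), z) ((1:ℝ), W z)) x i j
      = aE' φ W i j 0 x + ∑ k, aE φ W i k 0 x * jac W x k j := by
    intro i j
    rw [jac_dot φ hφ W hW x i j]
    simp only [hjw]
    congr 1
    · simp [aE']
    · exact Finset.sum_congr rfl fun k _ => by simp [aE]
  simp only [gg', Pd, frob, divg, Matrix.mul_apply, hv0, hφ0, hvdot, hφdot]
  simp only [Matrix.trace_fin_two, Fin.sum_univ_two]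
  ring

/-- Shape derivative of the mixed viscous term
`t ↦ ∫_{F_t(Δ)} ν ∇v(t,·) : ∇φ(t,·) dy`. -/
theorem shape_derivative_L2
    (W : EuclideanSpace ℝ (Fin 2) → EuclideanSpace ℝ (Fin 2))
    (hW : ContDiff ℝ 1 W) (hWc : HasCompactSupport W)
    (Δ : Set (EuclideanSpace ℝ (Fin 2))) (hΔm : MeasurableSet Δ)
    (hΔb : Bornology.IsBounded Δ) (ν : ℝ)
    (v φ : ℝ × EuclideanSpace ℝ (Fin 2) → EuclideanSpace ℝ (Fin 2))
    (hv : ContDiff ℝ 2 v) (hφ : ContDiff ℝ 2 φ)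
    (v₀ vdot φ₀ φdot : EuclideanSpace ℝ (Fin 2) → EuclideanSpace ℝ (Fin 2))
    (hv₀ : v₀ = fun z => v ((0 : ℝ), z))
    (hvdot : vdot = fun z => deriv (fun t : ℝ => v (t, z + t • W z)) 0)
    (hφ₀ : φ₀ = fun z => φ ((0 : ℝ), z))
    (hφdot : φdot = fun z => deriv (fun t : ℝ => φ (t, z + t • W z)) 0) :
    HasDerivAt
      (fun t : ℝ => ∫ y in (fun x => x + t • W x) '' Δ,
        ν * frob (jac (fun z => v (t, z)) y) (jac (fun z => φ (t, z)) y))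
      (∫ x in Δ,
        (ν * frob (jac vdot x) (jac φ₀ x)
          - ν * frob (jac v₀ x * jac W x) (jac φ₀ x)
          + ν * frob (jac v₀ x) (jac φdot x)
          - ν * frob (jac v₀ x) (jac φ₀ x * jac W x)
          + divg W x * (ν * frob (jac v₀ x) (jac φ₀ x)))) (0 : ℝ) := by
  
  subst hv₀ hvdot hφ₀ hφdot
  obtain ⟨M, hM0, hMd, hMl⟩ := W_bound hW hWc
  obtain ⟨R, hR⟩ := hΔb.subset_closedBall 0
  set K : ℝ := 2 * M + 2 * M ^ 2 + 1 with hKdef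
  have hKpos : (1:ℝ) ≤ K := by nlinarith
  set ε : ℝ := min (1 / (2 * M)) (1 / (2 * K)) with hεdef
  have hε0 : 0 < ε := lt_min (by positivity) (by positivity)
  have hε1 : ε ≤ 1 := le_trans (min_le_right _ _) (by
    rw [div_le_one (by linarith)]; linarith)
  have hεM : ε * M ≤ 1 / 2 := by
    have h1 : ε ≤ 1 / (2 * M) := min_le_left _ _
    rw [le_div_iff₀ (by positivity)] at h1
    nlinarith
  have hεK : ε * K ≤ 1 / 2 := by
    have h1 : ε ≤ 1 / (2 * K) := min_le_right _ _
    rw [le_div_iff₀ (by linarith)] at h1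
    nlinarith
  -- entry bounds
  have hEntry : ∀ (x : E2) (i j : Fin 2), |jac W x i j| ≤ M := by
    intro x i j
    have h1 : |jac W x i j| ≤ ‖fderiv ℝ W x (e2 j)‖ := coord_le_norm _ i
    refine le_trans h1 (le_trans ((fderiv ℝ W x).le_opNorm _) ?_)
    have : ‖e2 j‖ = 1 := by simp [e2]
    rw [this, mul_one]
    exact hMd x
  have htr : ∀ x : E2, |Matrix.trace (jac W x)| ≤ 2 * M := by
    intro x
    rw [Matrix.trace_fin_two]
    calc |jac W x 0 0 + jac W x 1 1| ≤ |jac W x 0 0| + |jac W x 1 1| := abs_add_le _ _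
      _ ≤ 2 * M := by have := hEntry x 0 0; have := hEntry x 1 1; linarith
  have hdet : ∀ x : E2, |Matrix.det (jac W x)| ≤ 2 * M ^ 2 := by
    intro x
    rw [Matrix.det_fin_two]
    have h1 := hEntry x 0 0; have h2 := hEntry x 1 1
    have h3 := hEntry x 0 1; have h4 := hEntry x 1 0
    calc |jac W x 0 0 * jac W x 1 1 - jac W x 0 1 * jac W x 1 0|
        ≤ |jac W x 0 0 * jac W x 1 1| + |jac W x 0 1 * jac W x 1 0| := abs_sub _ _
      _ = |jac W x 0 0| * |jac W x 1 1| + |jac W x 0 1| * |jac W x 1 0| := by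
          rw [abs_mul, abs_mul]
      _ ≤ M * M + M * M :=
          add_le_add (mul_le_mul h1 h2 (abs_nonneg _) (le_trans (abs_nonneg _) h1))
            (mul_le_mul h3 h4 (abs_nonneg _) (le_trans (abs_nonneg _) h3))
      _ = 2 * M ^ 2 := by ring
  have hPd_pos : ∀ (t : ℝ) (x : E2), |t| ≤ ε → (1:ℝ)/2 ≤ Pd W t x := by
    intro t x ht
    have h1 : |t * Matrix.trace (jac W x)| ≤ ε * (2 * M) := by
      rw [abs_mul]
      exact mul_le_mul ht (htr x) (abs_nonneg _) (le_of_lt hε0)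
    have h2 : |t ^ 2 * Matrix.det (jac W x)| ≤ ε * (2 * M ^ 2) := by
      rw [abs_mul, abs_pow]
      have ht2 : |t| ^ 2 ≤ ε := by
        calc |t| ^ 2 ≤ ε ^ 2 := pow_le_pow_left₀ (abs_nonneg t) ht 2
          _ ≤ ε := by nlinarith
      exact mul_le_mul ht2 (hdet x) (abs_nonneg _) (le_of_lt hε0)
    have hsum : |t * Matrix.trace (jac W x) + t ^ 2 * Matrix.det (jac W x)| ≤ 1/2 := by
      calc |t * Matrix.trace (jac W x) + t ^ 2 * Matrix.det (jac W x)|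
          ≤ ε * (2 * M) + ε * (2 * M ^ 2) := le_trans (abs_add_le _ _) (by linarith)
        _ = ε * (K - 1) := by rw [hKdef]; ring
        _ ≤ 1/2 := by nlinarith
    have := abs_le.1 hsum
    unfold Pd
    linarith [this.1]
  -- injectivity of the perturbed map
  have hInj : ∀ t : ℝ, |t| ≤ ε → Function.Injective fun x : E2 => x + t • W x := by
    intro t ht a b hab
    simp only at hab
    have hd : a - b = t • (W b - W a) := by
      have := hab
      rw [smul_sub]
      abel_nf
      abel_nf at this
      linear_combination (norm := module) this
    by_contra hne
    have hnorm : ‖a - b‖ = |t| * ‖W b - W a‖ := by rw [hd, norm_smul, Real.norm_eq_abs]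
    have h2 : ‖W b - W a‖ ≤ M * ‖a - b‖ := by
      calc ‖W b - W a‖ ≤ M * ‖b - a‖ := hMl b a
        _ = M * ‖a - b‖ := by rw [norm_sub_rev]
    have h3 : ‖a - b‖ ≤ ε * (M * ‖a - b‖) := by
      calc ‖a - b‖ = |t| * ‖W b - W a‖ := hnorm
        _ ≤ ε * (M * ‖a - b‖) := mul_le_mul ht h2 (norm_nonneg _) (le_of_lt hε0)
    have h4 : 0 < ‖a - b‖ := by
      rw [norm_pos_iff, sub_ne_zero]
      exact fun h => hne (by rw [h])
    nlinarith [hεM]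
  -- derivative of the perturbed map
  have hf't : ∀ (t : ℝ) (x : E2), HasFDerivAt (fun x : E2 => x + t • W x)
      (ContinuousLinearMap.id ℝ E2 + t • fderiv ℝ W x) x := fun t x =>
    (hasFDerivAt_id x).add (((hW.differentiable one_ne_zero x).hasFDerivAt).const_smul t)
  -- change of variables
  have hCoV : ∀ t : ℝ, |t| ≤ ε →
      (∫ y in (fun x => x + t • W x) '' Δ,
        ν * frob (jac (fun z => v (t, z)) y) (jac (fun z => φ (t, z)) y))
      = ∫ x in Δ, gg ν v φ W t x := by
    intro t ht
    rw [integral_image_eq_integral_abs_det_fderiv_smul volume hΔm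
      (fun x _ => (hf't t x).hasFDerivWithinAt) ((hInj t ht).injOn)]
    apply setIntegral_congr_fun hΔm
    intro x _
    have hdet1 : (ContinuousLinearMap.id ℝ E2 + t • fderiv ℝ W x).det = Pd W t x := det_eq t x
    have habs : |(ContinuousLinearMap.id ℝ E2 + t • fderiv ℝ W x).det| = Pd W t x := by
      rw [hdet1]
      exact abs_of_pos (lt_of_lt_of_le (by norm_num) (hPd_pos t x ht))
    beta_reduce
    rw [smul_eq_mul, habs]
    have hfrob : frob (jac (fun z => v (t, z)) (x + t • W x))
        (jac (fun z => φ (t, z)) (x + t • W x))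
        = ∑ i, ∑ j, aE v W i j t x * aE φ W i j t x := by
      unfold frob
      refine Finset.sum_congr rfl fun i _ => Finset.sum_congr rfl fun j _ => ?_
      rw [jac_partial v hv t (x + t • W x) i j, jac_partial φ hφ t (x + t • W x) i j]
      rfl
    rw [hfrob]
    unfold gg
    ring
  -- uniform bound for the derivative on a compact set
  set Kc : Set (ℝ × E2) := Set.Icc (-ε) ε ×ˢ Metric.closedBall (0 : E2) R with hKc
  have hKcomp : IsCompact Kc := (isCompact_Icc).prod (isCompact_closedBall _ _)
  obtain ⟨C, hC⟩ := hKcomp.exists_bound_of_continuousOn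
    ((cont_gg' ν v φ W hv hφ hW).continuousOn)
  -- differentiation under the integral sign
  have hMain : HasDerivAt (fun t : ℝ => ∫ x in Δ, gg ν v φ W t x)
      (∫ x in Δ, gg' ν v φ W 0 x) 0 := by
    have hres := hasDerivAt_integral_of_dominated_loc_of_deriv_le
      (μ := volume.restrict Δ) (F := fun t x => gg ν v φ W t x)
      (F' := fun t x => gg' ν v φ W t x) (x₀ := (0:ℝ)) (bound := fun _ => |C|) (s := Metric.ball (0:ℝ) ε)
      (Metric.ball_mem_nhds 0 hε0) ?_ ?_ ?_ ?_ ?_ ?_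
    · exact hres.2
    · exact Filter.Eventually.of_forall fun t =>
        (((cont_gg ν v φ W hv hφ hW).comp (continuous_const.prodMk continuous_id))).aestronglyMeasurable
    · exact (((cont_gg ν v φ W hv hφ hW).comp
        (continuous_const.prodMk continuous_id)).continuousOn.integrableOn_compact
        (isCompact_closedBall (0:E2) R)).mono_set hR
    · exact (((cont_gg' ν v φ W hv hφ hW).comp
        (continuous_const.prodMk continuous_id))).aestronglyMeasurable
    · filter_upwards [ae_restrict_mem hΔm] with x hx
      intro t ht
      have hmem : ((t, x) : ℝ × E2) ∈ Kc := by
        constructor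
        · have : |t| < ε := by simpa [Real.dist_eq] using ht
          exact Set.mem_Icc.2 ⟨by linarith [abs_le.1 (le_of_lt this)], (abs_le.1 (le_of_lt this)).2⟩
        · exact hR hx
      calc ‖gg' ν v φ W t x‖ ≤ C := hC (t, x) hmem
        _ ≤ |C| := le_abs_self C
    · exact integrableOn_const (hΔb.measure_lt_top).ne
    · exact Filter.Eventually.of_forall fun x t _ => hasDerivAt_gg ν v φ W hv hφ t x
  -- identify the derivative value
  have hval : (∫ x in Δ, gg' ν v φ W 0 x)
      = ∫ x in Δ,
        (ν * frob (jac (fun z => deriv (fun t : ℝ => v (t, z + t • W z)) 0) x)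
            (jac (fun z => φ ((0:ℝ), z)) x)
          - ν * frob (jac (fun z => v ((0:ℝ), z)) x * jac W x) (jac (fun z => φ ((0:ℝ), z)) x)
          + ν * frob (jac (fun z => v ((0:ℝ), z)) x)
              (jac (fun z => deriv (fun t : ℝ => φ (t, z + t • W z)) 0) x)
          - ν * frob (jac (fun z => v ((0:ℝ), z)) x)
              (jac (fun z => φ ((0:ℝ), z)) x * jac W x)
          + divg W x * (ν * frob (jac (fun z => v ((0:ℝ), z)) x)
              (jac (fun z => φ ((0:ℝ), z)) x))) := by
    apply setIntegral_congr_fun hΔm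
    intro x _
    rw [dot_eq v hv W, dot_eq φ hφ W]
    exact gg'_zero ν v φ W hv hφ hW x
  rw [← hval]
  apply hMain.congr_of_eventuallyEq
  filter_upwards [Metric.ball_mem_nhds (0:ℝ) hε0] with t ht
  exact hCoV t (le_of_lt (by simpa [Real.dist_eq] using ht))
end
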